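/- Let A ∈ ℝ^{n×n} be invertible, b ∈ ℝⁿ, γ ∈ (0,2), θ ∈ [0,1). Suppose x* satisfies Ax* − |x*| − b = 0 and ‖A^{-1}‖ < 1/[θ(((4/γ) − 1)‖A‖ + 1) + 2((2/γ) − 1)‖A‖ + 1]. Then any sequence {x^k} in ℝⁿ satisfying ‖(2/γ)A x^{k+1} − [((2/γ) − 1)A x^k + |x^k| + b]‖ ≤ θ‖Ax^k − |x^k| − b‖ for all k ≥ 0 converges linearly to x* from any starting point x^0. -/

import Mathlib

open Matrix Filter

/-- Componentwise absolute value of a vector in Euclidean space. -/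
noncomputable def vabs {n : ℕ} (x : EuclideanSpace ℝ (Fin n)) : EuclideanSpace ℝ (Fin n) :=
  WithLp.toLp 2 (fun i => |x i|)

/-- A matrix acting on Euclidean space (so that vector norms are the Euclidean 2-norm). -/
noncomputable def mulV {n : ℕ} (M : Matrix (Fin n) (Fin n) ℝ) (x : EuclideanSpace ℝ (Fin n)) :
    EuclideanSpace ℝ (Fin n) :=
  Matrix.toEuclideanCLM (𝕜 := ℝ) M x

/-- Spectral norm of a real matrix: the operator norm induced by the Euclidean vector norm. -/
noncomputable def spec {n : ℕ} (M : Matrix (Fin n) (Fin n) ℝ) : ℝ :=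
  ‖Matrix.toEuclideanCLM (𝕜 := ℝ) M‖

/-- The GAVE residual function `F(x) = A x − B |x| − b`. -/
noncomputable def gaveF {n : ℕ} (A B : Matrix (Fin n) (Fin n) ℝ)
    (b : EuclideanSpace ℝ (Fin n)) (x : EuclideanSpace ℝ (Fin n)) : EuclideanSpace ℝ (Fin n) :=
  mulV A x - mulV B (vabs x) - b

/-- The AVE residual function `A x − |x| − b` (the GAVE with `B = I`). -/
noncomputable def aveF {n : ℕ} (A : Matrix (Fin n) (Fin n) ℝ)
    (b : EuclideanSpace ℝ (Fin n)) (x : EuclideanSpace ℝ (Fin n)) : EuclideanSpace ℝ (Fin n) :=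
  mulV A x - vabs x - b

/-- A sequence converges linearly to `xs`: the distances to `xs` contract by a fixed
factor `c < 1` at every step, and the sequence tends to `xs`. -/
def ConvergesLinearlyTo {n : ℕ} (x : ℕ → EuclideanSpace ℝ (Fin n))
    (xs : EuclideanSpace ℝ (Fin n)) : Prop :=
  (∃ c : ℝ, 0 ≤ c ∧ c < 1 ∧ ∀ k : ℕ, ‖x (k + 1) - xs‖ ≤ c * ‖x k - xs‖) ∧
    Tendsto x atTop (nhds xs)

lemma vabs_lip {n : ℕ} (x y : EuclideanSpace ℝ (Fin n)) : ‖vabs x - vabs y‖ ≤ ‖x - y‖ := by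
  rw [EuclideanSpace.norm_eq, EuclideanSpace.norm_eq]
  apply Real.sqrt_le_sqrt
  apply Finset.sum_le_sum
  intro i _
  have h1 : (vabs x - vabs y) i = |x i| - |y i| := rfl
  have h2 : (x - y) i = x i - y i := rfl
  rw [h1, h2, Real.norm_eq_abs, Real.norm_eq_abs]
  exact pow_le_pow_left₀ (abs_nonneg _) (abs_abs_sub_abs_le_abs_sub (x i) (y i)) 2

lemma mulV_smul {n : ℕ} (s : ℝ) (A : Matrix (Fin n) (Fin n) ℝ) (z : EuclideanSpace ℝ (Fin n)) :
    mulV (s • A) z = s • mulV A z := by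
  simp [mulV, _root_.map_smul]

lemma mulV_sub {n : ℕ} (A : Matrix (Fin n) (Fin n) ℝ) (y z : EuclideanSpace ℝ (Fin n)) :
    mulV A (y - z) = mulV A y - mulV A z := by
  simp [mulV, map_sub]

lemma mulV_inv {n : ℕ} (A : Matrix (Fin n) (Fin n) ℝ) (hA : IsUnit A)
    (z : EuclideanSpace ℝ (Fin n)) : mulV A⁻¹ (mulV A z) = z := by
  have h : A⁻¹ * A = 1 := Matrix.nonsing_inv_mul A (Matrix.isUnit_iff_isUnit_det A |>.mp hA)
  calc mulV A⁻¹ (mulV A z)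
      = (Matrix.toEuclideanCLM (𝕜 := ℝ) (A⁻¹ * A)) z := by simp [mulV, _root_.map_mul]
    _ = z := by rw [h]; simp

lemma mulV_norm_le {n : ℕ} (A : Matrix (Fin n) (Fin n) ℝ) (z : EuclideanSpace ℝ (Fin n)) :
    ‖mulV A z‖ ≤ spec A * ‖z‖ :=
  (Matrix.toEuclideanCLM (𝕜 := ℝ) A).le_opNorm z

set_option maxHeartbeats 2000000 in
theorem stmt12 {n : ℕ} (A : Matrix (Fin n) (Fin n) ℝ)
    (b : EuclideanSpace ℝ (Fin n)) (hA : IsUnit A) (γ θ : ℝ)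
    (hγ0 : 0 < γ) (hγ2 : γ < 2) (hθ0 : 0 ≤ θ) (hθ1 : θ < 1)
    (xs : EuclideanSpace ℝ (Fin n)) (hxs : aveF A b xs = 0)
    (hcond : spec A⁻¹ <
      1 / (θ * ((4 / γ - 1) * spec A + 1) + 2 * (2 / γ - 1) * spec A + 1))
    (x : ℕ → EuclideanSpace ℝ (Fin n))
    (hx : ∀ k : ℕ, ‖mulV ((2 / γ) • A) (x (k + 1)) -
        (mulV ((2 / γ - 1) • A) (x k) + vabs (x k) + b)‖ ≤
      θ * ‖aveF A b (x k)‖) :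
    ConvergesLinearlyTo x xs := by
  set a : ℝ := spec A with ha_def
  set i : ℝ := spec A⁻¹ with hi_def
  have ha0 : 0 ≤ a := norm_nonneg _
  have hi0 : 0 ≤ i := norm_nonneg _
  set u : ℝ := 2 / γ with hu_def
  have hu1 : 1 < u := (one_lt_div hγ0).2 hγ2
  have hu0 : 0 < u := lt_trans one_pos hu1
  -- b in terms of xs
  have hb : mulV A xs - vabs xs = b := sub_eq_zero.mp hxs
  set c : ℝ := i * ((θ * (a + 1) + (u - 1) * a + 1) / u) with hc_def
  have hN0 : 0 ≤ θ * (a + 1) + (u - 1) * a + 1 := by nlinarith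
  have hc0 : 0 ≤ c := mul_nonneg hi0 (div_nonneg hN0 hu0.le)
  -- the contraction bound
  have step : ∀ k : ℕ, ‖x (k + 1) - xs‖ ≤ c * ‖x k - xs‖ := by
    intro k
    set d' := x (k + 1) - xs with hd'
    set d := x k - xs with hd
    set w := vabs (x k) - vabs xs with hw
    have hFk : aveF A b (x k) = mulV A d - w := by
      rw [hd, hw, mulV_sub]
      show mulV A (x k) - vabs (x k) - b = _
      rw [← hb]
      abel
    have hFnorm : ‖aveF A b (x k)‖ ≤ (a + 1) * ‖d‖ := by
      rw [hFk]
      calc ‖mulV A d - w‖ ≤ ‖mulV A d‖ + ‖w‖ := norm_sub_le _ _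
        _ ≤ a * ‖d‖ + ‖d‖ := add_le_add (mulV_norm_le A d) (vabs_lip _ _)
        _ = (a + 1) * ‖d‖ := by ring
    set r := mulV ((2 / γ) • A) (x (k + 1)) -
        (mulV ((2 / γ - 1) • A) (x k) + vabs (x k) + b) with hr_def
    have hr : ‖r‖ ≤ θ * ((a + 1) * ‖d‖) :=
      le_trans (hx k) (mul_le_mul_of_nonneg_left hFnorm hθ0)
    have hid : u • mulV A d' = r + (u - 1) • mulV A d + w := by
      rw [hr_def, hd', hd, hw, mulV_smul, mulV_smul, mulV_sub, mulV_sub, ← hb]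
      module
    have h1 : u * ‖mulV A d'‖ ≤ θ * ((a + 1) * ‖d‖) + (u - 1) * (a * ‖d‖) + ‖d‖ := by
      have e1 : ‖u • mulV A d'‖ = u * ‖mulV A d'‖ := by
        rw [norm_smul, Real.norm_eq_abs, abs_of_pos hu0]
      rw [← e1, hid]
      calc ‖r + (u - 1) • mulV A d + w‖ ≤ ‖r‖ + ‖(u - 1) • mulV A d‖ + ‖w‖ :=
            norm_add₃_le
        _ ≤ θ * ((a + 1) * ‖d‖) + (u - 1) * (a * ‖d‖) + ‖d‖ := by
            refine add_le_add (add_le_add hr ?_) (vabs_lip _ _)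
            rw [norm_smul, Real.norm_eq_abs, abs_of_pos (by linarith : (0:ℝ) < u - 1)]
            exact mul_le_mul_of_nonneg_left (mulV_norm_le A d) (by linarith)
    have h2 : ‖mulV A d'‖ ≤ ((θ * (a + 1) + (u - 1) * a + 1) / u) * ‖d‖ := by
      rw [div_mul_eq_mul_div, le_div_iff₀ hu0]
      nlinarith [h1]
    have h3 : ‖d'‖ ≤ i * ‖mulV A d'‖ := by
      conv_lhs => rw [show d' = mulV A⁻¹ (mulV A d') from (mulV_inv A hA d').symm]
      exact mulV_norm_le A⁻¹ _
    calc ‖d'‖ ≤ i * ‖mulV A d'‖ := h3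
      _ ≤ i * (((θ * (a + 1) + (u - 1) * a + 1) / u) * ‖d‖) :=
          mul_le_mul_of_nonneg_left h2 hi0
      _ = c * ‖d‖ := by rw [hc_def]; ring
  -- c < 1
  have hc1 : c < 1 := by
    have h4γ : (4:ℝ) / γ = 2 * u := by rw [hu_def]; ring
    rw [h4γ] at hcond
    have hD0 : 0 < θ * ((2 * u - 1) * a + 1) + 2 * (u - 1) * a + 1 := by
      nlinarith [mul_nonneg hθ0 (mul_nonneg (by linarith : (0:ℝ) ≤ 2 * u - 1) ha0),
        mul_nonneg (by linarith : (0:ℝ) ≤ 2 * (u - 1)) ha0]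
    have hiD : i * (θ * ((2 * u - 1) * a + 1) + 2 * (u - 1) * a + 1) < 1 :=
      (lt_div_iff₀ hD0).mp hcond
    have hNuD : θ * (a + 1) + (u - 1) * a + 1 ≤
        u * (θ * ((2 * u - 1) * a + 1) + 2 * (u - 1) * a + 1) := by
      nlinarith [mul_nonneg (mul_nonneg hθ0 ha0) (by nlinarith : (0:ℝ) ≤ (2 * u + 1) * (u - 1)),
        mul_nonneg hθ0 (by linarith : (0:ℝ) ≤ u - 1),
        mul_nonneg (mul_nonneg (by linarith : (0:ℝ) ≤ u - 1) ha0)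
          (by linarith : (0:ℝ) ≤ 2 * u - 1)]
    have : i * (θ * (a + 1) + (u - 1) * a + 1) < u := by
      calc i * (θ * (a + 1) + (u - 1) * a + 1)
          ≤ i * (u * (θ * ((2 * u - 1) * a + 1) + 2 * (u - 1) * a + 1)) :=
            mul_le_mul_of_nonneg_left hNuD hi0
        _ = u * (i * (θ * ((2 * u - 1) * a + 1) + 2 * (u - 1) * a + 1)) := by ring
        _ < u * 1 := mul_lt_mul_of_pos_left hiD hu0
        _ = u := mul_one u
    rw [hc_def, mul_div_assoc', div_lt_one hu0]
    exact this
  refine ⟨⟨c, hc0, hc1, step⟩, ?_⟩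
  -- convergence
  have hbound : ∀ k : ℕ, ‖x k - xs‖ ≤ c ^ k * ‖x 0 - xs‖ := by
    intro k
    induction k with
    | zero => simp
    | succ m ih =>
      calc ‖x (m + 1) - xs‖ ≤ c * ‖x m - xs‖ := step m
        _ ≤ c * (c ^ m * ‖x 0 - xs‖) := mul_le_mul_of_nonneg_left ih hc0
        _ = c ^ (m + 1) * ‖x 0 - xs‖ := by ring
  have htend : Filter.Tendsto (fun k => c ^ k * ‖x 0 - xs‖) Filter.atTop (nhds 0) := by
    have := (tendsto_pow_atTop_nhds_zero_of_lt_one hc0 hc1).mul_const ‖x 0 - xs‖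
    simpa using this
  have hnorm0 : Filter.Tendsto (fun k => ‖x k - xs‖) Filter.atTop (nhds 0) :=
    squeeze_zero (fun k => norm_nonneg _) hbound htend
  rw [tendsto_iff_norm_sub_tendsto_zero]
  exact hnorm0
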